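/- For a partition λ with λ_1 = n-1 (padded with zeros to length n+1) and bottom boundary δ_{n-1}, the partition function satisfies the recurrence 𝔠^n(λ) = Σ_{i=2}^{n+1} q^{i-2} 𝔠^{n-1}(λ^i), where λ^i is λ with λ_1 and λ_i removed. -/

import Mathlib

open scoped Classical

/-- A Dellac configuration of size `n` with boundaries `λ`, `μ`: `2n` dots `(i,j)`
(`i` = row from top, `j` = column, both 1-based) in a `2n × n` grid, one dot per row,
two dots per column, with no dots in the top-left region of `λ` (row `i ≤ n-1` forbids
columns `1..λ_i`) nor in the bottom-right region of `μ` (row `i ≥ n+2` forbids columns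
`n+1-μ_{2n+1-i}..n`). -/
def IsBConfig (n : ℕ) (lam mu : List ℕ) (C : Finset (ℕ × ℕ)) : Prop :=
  (∀ d ∈ C, 1 ≤ d.1 ∧ d.1 ≤ 2 * n ∧ 1 ≤ d.2 ∧ d.2 ≤ n) ∧
  (∀ i ∈ Finset.Icc 1 (2 * n), (C.filter (fun d => d.1 = i)).card = 1) ∧
  (∀ j ∈ Finset.Icc 1 n, (C.filter (fun d => d.2 = j)).card = 2) ∧
  (∀ d ∈ C, d.1 ≤ n - 1 → lam.getD (d.1 - 1) 0 < d.2) ∧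
  (∀ d ∈ C, n + 2 ≤ d.1 → d.2 + mu.getD (2 * n - d.1) 0 ≤ n)

/-- Number of inversions: pairs of dots with one strictly lower (larger row index from
the top) and strictly to the right of the other. -/
def invB (C : Finset (ℕ × ℕ)) : ℕ :=
  ((C ×ˢ C).filter (fun p => p.1.1 < p.2.1 ∧ p.1.2 < p.2.2)).card

/-- The partition function `𝔠ⁿ(λ,μ) = Σ_C q^{inv(C)}` over all Dellac configurations of
size `n` with boundaries `λ` and `μ`. -/
noncomputable def partFun (n : ℕ) (lam mu : List ℕ) : Polynomial ℕ :=
  ∑ C ∈ ((Finset.Icc 1 (2 * n) ×ˢ Finset.Icc 1 n).powerset.filter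
      (fun C => IsBConfig n lam mu C)), (Polynomial.X : Polynomial ℕ) ^ invB C

/-- The staircase partition `δ_k = (k, k-1, ..., 1)`. -/
def delta (k : ℕ) : List ℕ := (List.range k).map (fun i => k - i)

/-- `𝔠ⁿ(λ) := 𝔠ⁿ(λ, δ_{n-1})`. -/
noncomputable def cF (n : ℕ) (lam : List ℕ) : Polynomial ℕ := partFun n lam (delta (n - 1))

/-- `λ` is a partition inside the staircase `δ_{n-1}`. -/
def IsPartIn (n : ℕ) (lam : List ℕ) : Prop :=
  lam.length ≤ n - 1 ∧ List.Pairwise (· ≥ ·) lam ∧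
    ∀ i, i < lam.length → lam.getD i 0 ≤ n - 1 - i

/-- Pad a partition with zeros to length `k`. -/
def padTo (k : ℕ) (lam : List ℕ) : List ℕ := lam ++ List.replicate (k - lam.length) 0

open Polynomial

namespace S15

lemma getD_delta (k j : ℕ) : (delta k).getD j 0 = k - j := by
  unfold delta
  rcases lt_or_ge j k with hj | hj
  · rw [List.getD_eq_getElem _ _ (by simpa using hj)]
    simp
  · rw [List.getD_eq_default _ _ (by simpa using hj)]
    omega

lemma getD_padTo (m : ℕ) (l : List ℕ) (k : ℕ) : (padTo m l).getD k 0 = l.getD k 0 := by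
  unfold padTo
  rcases lt_or_ge k l.length with hk | hk
  · rw [List.getD_eq_getElem _ _ hk, List.getD_eq_getElem _ _ (by simp; omega),
      List.getElem_append_left hk]
  · rw [List.getD_eq_default _ _ hk]
    rcases lt_or_ge k (l.length + (m - l.length)) with hk2 | hk2
    · rw [List.getD_eq_getElem _ _ (by simpa using hk2)]
      simp [List.getElem_append_right hk]
    · rw [List.getD_eq_default _ _ (by simpa using hk2)]

lemma getD_tail (l : List ℕ) (k : ℕ) : l.tail.getD k 0 = l.getD (k+1) 0 := by
  cases l <;> simp [List.getD]

lemma getD_eraseIdx (l : List ℕ) (j k : ℕ) :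
    (l.eraseIdx j).getD k 0 = if k < j then l.getD k 0 else l.getD (k+1) 0 := by
  induction l generalizing j k with
  | nil => simp [List.eraseIdx]
  | cons a t ih =>
    cases j with
    | zero => simp [List.eraseIdx, getD_tail]
    | succ j =>
      cases k with
      | zero => simp [List.eraseIdx, List.getD]
      | succ k =>
        simp only [List.eraseIdx, List.getD_cons_succ, ih, Nat.succ_lt_succ_iff]

/-- getD of the reduced partition λ^i. -/
lemma getD_lam' (n : ℕ) (lam : List ℕ) (i k : ℕ) :
    (((padTo (n+1) lam).tail).eraseIdx (i-2)).getD k 0 =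
      if k < i - 2 then lam.getD (k+1) 0 else lam.getD (k+2) 0 := by
  rw [getD_eraseIdx]
  split <;> rw [getD_tail, getD_padTo]

def phi (i r : ℕ) : ℕ := if r < i then r - 1 else r - 2
def psi (i s : ℕ) : ℕ := if s + 1 < i then s + 1 else s + 2

def dn (n i : ℕ) (C : Finset (ℕ × ℕ)) : Finset (ℕ × ℕ) :=
  ((C.erase (1, n)).erase (i, n)).image fun d => (phi i d.1, d.2)

def up (n i : ℕ) (D : Finset (ℕ × ℕ)) : Finset (ℕ × ℕ) :=
  (D.image fun d => (psi i d.1, d.2)) ∪ {(1, n), (i, n)}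

def rowN (n : ℕ) (C : Finset (ℕ × ℕ)) : ℕ := (C.filter fun d => d.2 = n).sup Prod.fst

end S15
namespace S15

section Facts

variable {n : ℕ} {lam : List ℕ} {C : Finset (ℕ × ℕ)}

lemma row_eq (hC : IsBConfig n lam (delta (n-1)) C) {d d' : ℕ × ℕ}
    (hd : d ∈ C) (hd' : d' ∈ C) (hdd : d.1 = d'.1) : d = d' := by
  have hb := hC.1 d hd
  have h1 : d.1 ∈ Finset.Icc 1 (2*n) := Finset.mem_Icc.2 ⟨hb.1, hb.2.1⟩
  have hcard := hC.2.1 d.1 h1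
  obtain ⟨a, ha⟩ := Finset.card_eq_one.1 hcard
  have h2 : d ∈ C.filter (fun x => x.1 = d.1) := Finset.mem_filter.2 ⟨hd, rfl⟩
  have h3 : d' ∈ C.filter (fun x => x.1 = d.1) := Finset.mem_filter.2 ⟨hd', hdd.symm⟩
  rw [ha, Finset.mem_singleton] at h2 h3
  rw [h2, h3]

lemma exists_dot (hC : IsBConfig n lam (delta (n-1)) C) {r : ℕ} (h1 : 1 ≤ r) (h2 : r ≤ 2*n) :
    ∃ c, (r, c) ∈ C := by
  have hcard := hC.2.1 r (Finset.mem_Icc.2 ⟨h1, h2⟩)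
  obtain ⟨a, ha⟩ := Finset.card_eq_one.1 hcard
  have : a ∈ C.filter (fun x => x.1 = r) := ha ▸ Finset.mem_singleton_self a
  rw [Finset.mem_filter] at this
  exact ⟨a.2, by rw [← this.2]; exact (Prod.mk.eta ▸ this.1)⟩

lemma key (hn : 2 ≤ n) (h1 : lam.getD 0 0 = n - 1)
    (hC : IsBConfig n lam (delta (n-1)) C) :
    ∃ i, 2 ≤ i ∧ i ≤ n + 1 ∧ C.filter (fun d => d.2 = n) = {(1,n), (i,n)} ∧ rowN n C = i := by
  -- the dot in row 1 is (1, n)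
  obtain ⟨c, hc⟩ := exists_dot hC (le_refl 1) (by omega)
  have hcn : c = n := by
    have hb := hC.1 _ hc
    have ht := hC.2.2.2.1 _ hc (by simp; omega)
    have ht' : lam.getD 0 0 < c := ht
    norm_num at hb
    omega
  rw [hcn] at hc
  -- column n has two dots
  have hcard := hC.2.2.1 n (Finset.mem_Icc.2 ⟨by omega, le_refl n⟩)
  obtain ⟨a, b, hab, hab2⟩ := Finset.card_eq_two.1 hcard
  have h1n : (1, n) ∈ C.filter (fun d => d.2 = n) := Finset.mem_filter.2 ⟨hc, rfl⟩
  rw [hab2, Finset.mem_insert, Finset.mem_singleton] at h1n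
  -- let e be the other dot
  obtain ⟨e, he1, he2⟩ : ∃ e, e ≠ (1, n) ∧ C.filter (fun d => d.2 = n) = {(1,n), e} := by
    rcases h1n with h | h
    · exact ⟨b, fun hh => hab (by rw [← h, hh]), by rw [hab2, ← h]⟩
    · exact ⟨a, fun hh => hab (by rw [hh, h]), by rw [hab2, ← h, Finset.pair_comm]⟩
  have heC : e ∈ C.filter (fun d => d.2 = n) := by
    rw [he2]; exact Finset.mem_insert_of_mem (Finset.mem_singleton_self e)
  rw [Finset.mem_filter] at heC
  obtain ⟨heC, hen⟩ := heC
  have heq : e = (e.1, n) := by rw [← hen]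
  have hb := hC.1 _ heC
  have he1' : e.1 ≠ 1 := by
    intro hh
    exact he1 (by rw [heq, hh])
  have hile : e.1 ≤ n + 1 := by
    by_contra hgt
    have hbot := hC.2.2.2.2 _ heC (by omega)
    rw [getD_delta, hen] at hbot
    omega
  refine ⟨e.1, by omega, hile, by rw [he2, heq], ?_⟩
  rw [rowN, he2, Finset.sup_insert, Finset.sup_singleton]
  simp only
  omega

end Facts

end S15
namespace S15

section Fiber

variable {n : ℕ} {lam : List ℕ} {C : Finset (ℕ × ℕ)} {i : ℕ}

/-- facts about dots of `C₀ = C \ {(1,n),(i,n)}`. -/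
lemma C0_facts (hn : 2 ≤ n) (hC : IsBConfig n lam (delta (n-1)) C)
    (hf : C.filter (fun d => d.2 = n) = {(1,n), (i,n)})
    {d : ℕ × ℕ} (hd : d ∈ (C.erase (1, n)).erase (i, n)) :
    d ∈ C ∧ 2 ≤ d.1 ∧ d.1 ≤ 2*n ∧ d.1 ≠ i ∧ 1 ≤ d.2 ∧ d.2 ≤ n - 1 := by
  rw [Finset.mem_erase, Finset.mem_erase] at hd
  obtain ⟨hdi, hd1, hdC⟩ := hd
  have h1n : (1, n) ∈ C := by
    have : (1, n) ∈ C.filter (fun d => d.2 = n) := by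
      rw [hf]; exact Finset.mem_insert_self _ _
    exact (Finset.mem_filter.1 this).1
  have hiC : (i, n) ∈ C := by
    have : (i, n) ∈ C.filter (fun d => d.2 = n) := by
      rw [hf]; exact Finset.mem_insert_of_mem (Finset.mem_singleton_self _)
    exact (Finset.mem_filter.1 this).1
  have hb := hC.1 d hdC
  have hne1 : d.1 ≠ 1 := fun hh => hd1 (row_eq hC hdC h1n hh)
  have hnei : d.1 ≠ i := fun hh => hdi (row_eq hC hdC hiC hh)
  have hnen : d.2 ≠ n := by
    intro hh
    have : d ∈ C.filter (fun d => d.2 = n) := Finset.mem_filter.2 ⟨hdC, hh⟩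
    rw [hf, Finset.mem_insert, Finset.mem_singleton] at this
    rcases this with h | h
    · exact hd1 h
    · exact hdi h
  exact ⟨hdC, by omega, hb.2.1, hnei, hb.2.2.1, by omega⟩

lemma mem_dots (hf : C.filter (fun d => d.2 = n) = {(1,n), (i,n)}) :
    (1, n) ∈ C ∧ (i, n) ∈ C :=
  ⟨(Finset.mem_filter.1 (hf ▸ Finset.mem_insert_self _ _ : (1,n) ∈ C.filter (fun d => d.2 = n))).1,
   (Finset.mem_filter.1 (hf ▸ Finset.mem_insert_of_mem (Finset.mem_singleton_self _) :
      (i,n) ∈ C.filter (fun d => d.2 = n))).1⟩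

/-- `phi i` is injective on the relevant rows. -/
lemma phi_inj (hi2 : 2 ≤ i) {r r' : ℕ} (h1 : 2 ≤ r) (h2 : r ≠ i) (h1' : 2 ≤ r') (h2' : r' ≠ i)
    (he : phi i r = phi i r') : r = r' := by
  unfold phi at he; split_ifs at he <;> omega

lemma psi_phi (hi2 : 2 ≤ i) {r : ℕ} (h1 : 2 ≤ r) (h2 : r ≠ i) : psi i (phi i r) = r := by
  unfold phi psi; split_ifs <;> omega

lemma phi_psi (hi2 : 2 ≤ i) {s : ℕ} (h1 : 1 ≤ s) : phi i (psi i s) = s := by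
  unfold phi psi; split_ifs <;> omega

lemma injOn_e (hn : 2 ≤ n) (hC : IsBConfig n lam (delta (n-1)) C) (hi2 : 2 ≤ i)
    (hf : C.filter (fun d => d.2 = n) = {(1,n), (i,n)}) :
    Set.InjOn (fun d : ℕ × ℕ => (phi i d.1, d.2)) ((C.erase (1, n)).erase (i, n)) := by
  intro d hd d' hd' he
  have f1 := C0_facts hn hC hf hd
  have f2 := C0_facts hn hC hf hd'
  simp only [Prod.mk.injEq] at he
  have := phi_inj hi2 f1.2.1 f1.2.2.2.1 f2.2.1 f2.2.2.2.1 he.1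
  exact Prod.ext this he.2

/-- Rows of the image config. -/
lemma dn_mem_iff {D : Finset (ℕ × ℕ)} {d : ℕ × ℕ} :
    d ∈ dn n i C ↔ ∃ d₀ ∈ (C.erase (1, n)).erase (i, n), (phi i d₀.1, d₀.2) = d := by
  simp [dn]

end Fiber

end S15
namespace S15

section Fiber2

variable {n : ℕ} {lam : List ℕ} {C : Finset (ℕ × ℕ)} {i : ℕ}

lemma psi_ne_one {j : ℕ} (hj : 1 ≤ j) : psi i j ≠ 1 := by unfold psi; split <;> omega
lemma psi_ne_i {j : ℕ} : psi i j ≠ i := by unfold psi; split <;> omega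

lemma C0_filter_row (hC : IsBConfig n lam (delta (n-1)) C) {r : ℕ} (h1 : r ≠ 1) (h2 : r ≠ i) :
    ((C.erase (1, n)).erase (i, n)).filter (fun d => d.1 = r) = C.filter (fun d => d.1 = r) := by
  rw [Finset.filter_erase, Finset.filter_erase]
  rw [Finset.erase_eq_of_notMem, Finset.erase_eq_of_notMem]
  · intro hmem
    exact h1 ((Finset.mem_filter.1 hmem).2).symm
  · intro hmem
    exact h2 ((Finset.mem_filter.1 (Finset.mem_of_mem_erase hmem)).2).symm

lemma C0_filter_col (hC : IsBConfig n lam (delta (n-1)) C) {c : ℕ} (h1 : c ≠ n) :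
    ((C.erase (1, n)).erase (i, n)).filter (fun d => d.2 = c) = C.filter (fun d => d.2 = c) := by
  rw [Finset.filter_erase, Finset.filter_erase]
  rw [Finset.erase_eq_of_notMem, Finset.erase_eq_of_notMem]
  · intro hmem
    exact h1 ((Finset.mem_filter.1 hmem).2).symm
  · intro hmem
    exact h1 ((Finset.mem_filter.1 (Finset.mem_of_mem_erase hmem)).2).symm

lemma dn_filter_row (hn : 2 ≤ n) (hC : IsBConfig n lam (delta (n-1)) C) (hi2 : 2 ≤ i)
    (hf : C.filter (fun d => d.2 = n) = {(1,n), (i,n)})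
    {j : ℕ} (hj1 : 1 ≤ j) :
    (dn n i C).filter (fun d => d.1 = j) =
      (C.filter (fun d => d.1 = psi i j)).image (fun d => (phi i d.1, d.2)) := by
  rw [dn, Finset.filter_image]
  congr 1
  rw [← C0_filter_row hC (psi_ne_one hj1) psi_ne_i]
  apply Finset.filter_congr
  intro d hd
  have fd := C0_facts hn hC hf hd
  simp only [eq_iff_iff]
  constructor
  · intro he
    rw [← psi_phi hi2 fd.2.1 fd.2.2.2.1, he]
  · intro he
    rw [he, phi_psi hi2 hj1]

lemma dn_filter_col (hn : 2 ≤ n) (hC : IsBConfig n lam (delta (n-1)) C)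
    {j : ℕ} (hj : j ≠ n) :
    (dn n i C).filter (fun d => d.2 = j) =
      (C.filter (fun d => d.2 = j)).image (fun d => (phi i d.1, d.2)) := by
  rw [dn, Finset.filter_image]
  congr 1
  exact C0_filter_col hC hj

end Fiber2

end S15
namespace S15

lemma config_subset {m : ℕ} {l mu : List ℕ} {D : Finset (ℕ × ℕ)}
    (hD : IsBConfig m l mu D) : D ⊆ Finset.Icc 1 (2*m) ×ˢ Finset.Icc 1 m := by
  intro d hd
  have := hD.1 d hd
  rw [Finset.mem_product, Finset.mem_Icc, Finset.mem_Icc]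
  exact ⟨⟨this.1, this.2.1⟩, ⟨this.2.2.1, this.2.2.2⟩⟩

section Fiber3

variable {n : ℕ} {lam : List ℕ} {C : Finset (ℕ × ℕ)} {i : ℕ}

lemma dn_isConfig (hn : 2 ≤ n) (hpart : IsPartIn n lam)
    (hC : IsBConfig n lam (delta (n-1)) C) (hi2 : 2 ≤ i) (hin : i ≤ n+1)
    (hf : C.filter (fun d => d.2 = n) = {(1,n), (i,n)}) :
    IsBConfig (n-1) (((padTo (n+1) lam).tail).eraseIdx (i-2)) (delta (n-1-1)) (dn n i C) := by
  refine ⟨?_, ?_, ?_, ?_, ?_⟩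
  · -- bounds
    intro d hd
    rw [dn, Finset.mem_image] at hd
    obtain ⟨d₀, hd₀, rfl⟩ := hd
    have f := C0_facts hn hC hf hd₀
    obtain ⟨-, f1, f2, f3, f4, f5⟩ := f
    dsimp only
    unfold phi
    refine ⟨by split <;> omega, by split <;> omega, f4, by omega⟩
  · -- rows
    intro j hj
    rw [Finset.mem_Icc] at hj
    rw [dn_filter_row hn hC hi2 hf hj.1, ← C0_filter_row hC (psi_ne_one hj.1) psi_ne_i,
      Finset.card_image_of_injOn
        ((injOn_e hn hC hi2 hf).mono (Finset.coe_subset.2 (Finset.filter_subset _ _))),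
      C0_filter_row hC (psi_ne_one hj.1) psi_ne_i]
    apply hC.2.1
    rw [Finset.mem_Icc]
    unfold psi
    constructor
    · split <;> omega
    · split <;> omega
  · -- cols
    intro j hj
    rw [Finset.mem_Icc] at hj
    have hjn : j ≠ n := by omega
    rw [dn_filter_col hn hC hjn, ← C0_filter_col hC hjn,
      Finset.card_image_of_injOn
        ((injOn_e hn hC hi2 hf).mono (Finset.coe_subset.2 (Finset.filter_subset _ _))),
      C0_filter_col hC hjn]
    apply hC.2.2.1
    rw [Finset.mem_Icc]
    omega
  · -- top boundary
    intro d hd htop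
    rw [dn, Finset.mem_image] at hd
    obtain ⟨d₀, hd₀, rfl⟩ := hd
    have f := C0_facts hn hC hf hd₀
    obtain ⟨fC, f1, f2, f3, f4, f5⟩ := f
    dsimp only at htop ⊢
    rw [getD_lam']
    unfold phi at htop ⊢
    by_cases hri : d₀.1 < i
    · rw [if_pos hri] at htop ⊢
      rw [if_pos (by omega)]
      have he : d₀.1 - 1 - 1 + 1 = d₀.1 - 1 := by omega
      rw [he]
      exact hC.2.2.2.1 d₀ fC (by omega)
    · rw [if_neg hri] at htop ⊢
      rw [if_neg (by omega)]
      have he : d₀.1 - 2 - 1 + 2 = d₀.1 - 1 := by omega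
      rw [he]
      rcases lt_or_ge d₀.1 n with hrn | hrn
      · exact hC.2.2.2.1 d₀ fC (by omega)
      · have hlen := hpart.1
        rw [List.getD_eq_default _ _ (by omega : lam.length ≤ d₀.1 - 1)]
        exact f4
  · -- bottom boundary
    intro d hd hbot
    rw [dn, Finset.mem_image] at hd
    obtain ⟨d₀, hd₀, rfl⟩ := hd
    have f := C0_facts hn hC hf hd₀
    obtain ⟨fC, f1, f2, f3, f4, f5⟩ := f
    dsimp only at hbot ⊢
    rw [getD_delta]
    unfold phi at hbot ⊢
    by_cases hri : d₀.1 < i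
    · rw [if_pos hri] at hbot
      omega
    · rw [if_neg hri] at hbot
      have hb := hC.2.2.2.2 d₀ fC (by omega)
      rw [getD_delta] at hb
      rw [if_neg hri]
      omega

end Fiber3

end S15
namespace S15

section Fiber4

variable {n : ℕ} {lam : List ℕ} {D : Finset (ℕ × ℕ)} {i : ℕ}

lemma psi_inj {s s' : ℕ} (h : psi i s = psi i s') : s = s' := by
  unfold psi at h; split at h <;> split at h <;> omega

lemma injOn_u : Set.InjOn (fun d : ℕ × ℕ => (psi i d.1, d.2)) D := by
  intro d _ d' _ he
  simp only [Prod.mk.injEq] at he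
  exact Prod.ext (psi_inj he.1) he.2

lemma lam_lt_n (hn : 2 ≤ n) (hpart : IsPartIn n lam) (k : ℕ) : lam.getD k 0 < n := by
  rcases lt_or_ge k lam.length with hk | hk
  · have := hpart.2.2 k hk
    omega
  · rw [List.getD_eq_default _ _ hk]
    omega

lemma spec_filter_row {j : ℕ} (hj1 : j ≠ 1) (hji : j ≠ i) :
    ({((1:ℕ),n), (i,n)} : Finset (ℕ × ℕ)).filter (fun d => d.1 = j) = ∅ := by
  rw [Finset.filter_eq_empty_iff]
  intro x hx
  rw [Finset.mem_insert, Finset.mem_singleton] at hx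
  rcases hx with rfl | rfl
  · exact fun hh => hj1 hh.symm
  · exact fun hh => hji hh.symm

lemma up_isConfig (hn : 2 ≤ n) (hpart : IsPartIn n lam) (h1 : lam.getD 0 0 = n - 1)
    (hi2 : 2 ≤ i) (hin : i ≤ n+1)
    (hD : IsBConfig (n-1) (((padTo (n+1) lam).tail).eraseIdx (i-2)) (delta (n-1-1)) D) :
    IsBConfig n lam (delta (n-1)) (up n i D) := by
  have hDb : ∀ d ∈ D, 1 ≤ d.1 ∧ d.1 ≤ 2*(n-1) ∧ 1 ≤ d.2 ∧ d.2 ≤ n-1 := hD.1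
  refine ⟨?_, ?_, ?_, ?_, ?_⟩
  · -- bounds
    intro d hd
    rw [up, Finset.mem_union, Finset.mem_image] at hd
    rcases hd with ⟨d₀, hd₀, rfl⟩ | hd
    · have f := hDb d₀ hd₀
      dsimp only
      unfold psi
      refine ⟨by split <;> omega, by split <;> omega, f.2.2.1, by omega⟩
    · rw [Finset.mem_insert, Finset.mem_singleton] at hd
      rcases hd with rfl | rfl <;> dsimp only <;> omega
  · -- rows
    intro j hj
    rw [Finset.mem_Icc] at hj
    rw [up, Finset.filter_union, Finset.filter_image]
    by_cases hj1 : j = 1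
    · subst hj1
      have h1 : D.filter (fun d => psi i d.1 = 1) = ∅ := by
        rw [Finset.filter_eq_empty_iff]
        intro x hx
        exact psi_ne_one (hDb x hx).1
      have h2 : ({((1:ℕ),n), (i,n)} : Finset (ℕ × ℕ)).filter (fun d => d.1 = 1) = {(1,n)} := by
        rw [Finset.filter_insert, if_pos rfl, Finset.filter_singleton,
          if_neg (fun hh : i = 1 => by omega)]
        simp
      rw [h1, h2, Finset.image_empty, Finset.empty_union, Finset.card_singleton]
    · by_cases hji : j = i
      · subst j
        have h1 : D.filter (fun d => psi i d.1 = i) = ∅ := by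
          rw [Finset.filter_eq_empty_iff]
          intro x hx
          exact psi_ne_i
        have h2 : ({((1:ℕ),n), (i,n)} : Finset (ℕ × ℕ)).filter (fun d => d.1 = i) = {(i,n)} := by
          rw [Finset.filter_insert, if_neg (fun hh : (1:ℕ) = i => by omega),
            Finset.filter_singleton, if_pos rfl]
        rw [h1, h2, Finset.image_empty, Finset.empty_union, Finset.card_singleton]
      · rw [spec_filter_row hj1 hji, Finset.union_empty]
        have hcong : D.filter (fun d => psi i d.1 = j) = D.filter (fun d => d.1 = phi i j) := by
          apply Finset.filter_congr
          intro d hd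
          constructor
          · intro he
            rw [← he, phi_psi hi2 (hDb d hd).1]
          · intro he
            rw [he, psi_phi hi2 (by omega) hji]
        rw [hcong, Finset.card_image_of_injOn (injOn_u.mono (Finset.coe_subset.2
          (Finset.filter_subset _ _)))]
        apply hD.2.1
        rw [Finset.mem_Icc]
        unfold phi
        constructor
        · split <;> omega
        · split <;> omega
  · -- cols
    intro j hj
    rw [Finset.mem_Icc] at hj
    rw [up, Finset.filter_union, Finset.filter_image]
    by_cases hjn : j = n
    · subst j
      have h1 : D.filter (fun d => ((psi i d.1, d.2) : ℕ × ℕ).2 = n) = ∅ := by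
        rw [Finset.filter_eq_empty_iff]
        intro x hx
        have := (hDb x hx).2.2.2
        dsimp only
        omega
      have h2 : ({((1:ℕ),n), (i,n)} : Finset (ℕ × ℕ)).filter (fun d => d.2 = n) =
          {(1,n), (i,n)} := by
        rw [Finset.filter_insert, if_pos rfl, Finset.filter_singleton, if_pos rfl]
      rw [h1, h2, Finset.image_empty, Finset.empty_union]
      rw [Finset.card_insert_of_notMem (by
        rw [Finset.mem_singleton]
        intro hh
        have := congrArg Prod.fst hh
        dsimp at this
        omega), Finset.card_singleton]
    · have h2 : ({((1:ℕ),n), (i,n)} : Finset (ℕ × ℕ)).filter (fun d => d.2 = j) = ∅ := by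
        rw [Finset.filter_eq_empty_iff]
        intro x hx
        rw [Finset.mem_insert, Finset.mem_singleton] at hx
        rcases hx with rfl | rfl <;> exact fun hh => hjn hh.symm
      rw [h2, Finset.union_empty]
      have hcong : D.filter (fun d => ((psi i d.1, d.2) : ℕ × ℕ).2 = j) =
          D.filter (fun d => d.2 = j) := rfl
      rw [hcong, Finset.card_image_of_injOn (injOn_u.mono (Finset.coe_subset.2
        (Finset.filter_subset _ _)))]
      apply hD.2.2.1
      rw [Finset.mem_Icc]
      omega
  · -- top boundary
    intro d hd htop
    rw [up, Finset.mem_union, Finset.mem_image] at hd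
    rcases hd with ⟨d₀, hd₀, rfl⟩ | hd
    · have f := hDb d₀ hd₀
      dsimp only at htop ⊢
      have hD2 := hD.2.2.2.1 d₀ hd₀
      unfold psi at htop ⊢
      by_cases hcase : d₀.1 + 1 < i
      · rw [if_pos hcase] at htop ⊢
        have ht : lam.getD (d₀.1 + 1 - 1) 0 = lam.getD (d₀.1 - 1 + 1) 0 := by
          congr 1
          omega
        rw [ht]
        have := hD2 (by omega)
        rw [getD_lam', if_pos (by omega)] at this
        exact this
      · rw [if_neg hcase] at htop ⊢
        have ht : lam.getD (d₀.1 + 2 - 1) 0 = lam.getD (d₀.1 - 1 + 2) 0 := by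
          congr 1
          omega
        rw [ht]
        have := hD2 (by omega)
        rw [getD_lam', if_neg (by omega)] at this
        exact this
    · rw [Finset.mem_insert, Finset.mem_singleton] at hd
      rcases hd with rfl | rfl <;> dsimp only
      · rw [show (1:ℕ) - 1 = 0 from rfl, h1]
        omega
      · exact lam_lt_n hn hpart _
  · -- bottom boundary
    intro d hd hbot
    rw [up, Finset.mem_union, Finset.mem_image] at hd
    rcases hd with ⟨d₀, hd₀, rfl⟩ | hd
    · have f := hDb d₀ hd₀
      dsimp only at hbot ⊢
      rw [getD_delta]
      unfold psi at hbot ⊢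
      by_cases hcase : d₀.1 + 1 < i
      · rw [if_pos hcase] at hbot
        omega
      · rw [if_neg hcase] at hbot ⊢
        rcases lt_or_ge d₀.1 (n+1) with hs | hs
        · -- d₀.1 = n, boundary value 1
          omega
        · have := hD.2.2.2.2 d₀ hd₀ (by omega)
          rw [getD_delta] at this
          omega
    · rw [Finset.mem_insert, Finset.mem_singleton] at hd
      rcases hd with rfl | rfl <;> dsimp only at hbot ⊢ <;> omega

end Fiber4

end S15
namespace S15

section Fiber5

variable {n : ℕ} {lam : List ℕ} {C D : Finset (ℕ × ℕ)} {i : ℕ}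

lemma up_filter_n (hi2 : 2 ≤ i)
    (hDb : ∀ d ∈ D, 1 ≤ d.1 ∧ d.1 ≤ 2*(n-1) ∧ 1 ≤ d.2 ∧ d.2 ≤ n-1) (hn : 2 ≤ n) :
    (up n i D).filter (fun d => d.2 = n) = {(1,n), (i,n)} := by
  rw [up, Finset.filter_union, Finset.filter_image]
  have h1 : D.filter (fun d => ((psi i d.1, d.2) : ℕ × ℕ).2 = n) = ∅ := by
    rw [Finset.filter_eq_empty_iff]
    intro x hx
    have := (hDb x hx).2.2.2
    dsimp only
    omega
  have h2 : ({((1:ℕ),n), (i,n)} : Finset (ℕ × ℕ)).filter (fun d => d.2 = n) =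
      {(1,n), (i,n)} := by
    rw [Finset.filter_insert, if_pos rfl, Finset.filter_singleton, if_pos rfl]
  rw [h1, h2, Finset.image_empty, Finset.empty_union]

lemma rowN_up (hi2 : 2 ≤ i)
    (hDb : ∀ d ∈ D, 1 ≤ d.1 ∧ d.1 ≤ 2*(n-1) ∧ 1 ≤ d.2 ∧ d.2 ≤ n-1) (hn : 2 ≤ n) :
    rowN n (up n i D) = i := by
  rw [rowN, up_filter_n hi2 hDb hn, Finset.sup_insert, Finset.sup_singleton]
  simp only
  omega

lemma up_dn (hn : 2 ≤ n) (hC : IsBConfig n lam (delta (n-1)) C) (hi2 : 2 ≤ i)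
    (hf : C.filter (fun d => d.2 = n) = {(1,n), (i,n)}) :
    up n i (dn n i C) = C := by
  obtain ⟨h1n, hin'⟩ := mem_dots hf
  rw [up, dn, Finset.image_image]
  have himg : ((C.erase (1,n)).erase (i,n)).image
      ((fun d : ℕ × ℕ => (psi i d.1, d.2)) ∘ (fun d : ℕ × ℕ => (phi i d.1, d.2))) =
      (C.erase (1,n)).erase (i,n) := by
    rw [show ((fun d : ℕ × ℕ => (psi i d.1, d.2)) ∘ (fun d : ℕ × ℕ => (phi i d.1, d.2))) =
        (fun d : ℕ × ℕ => (psi i (phi i d.1), d.2)) from rfl]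
    rw [Finset.image_congr (g := id), Finset.image_id]
    intro d hd
    have f := C0_facts hn hC hf hd
    exact Prod.ext (psi_phi hi2 f.2.1 f.2.2.2.1) rfl
  rw [himg]
  ext d
  rw [Finset.mem_union, Finset.mem_erase, Finset.mem_erase, Finset.mem_insert,
    Finset.mem_singleton]
  constructor
  · rintro (⟨hdi, hd1, hdC⟩ | rfl | rfl)
    · exact hdC
    · exact h1n
    · exact hin'
  · intro hdC
    by_cases e1 : d = (1,n)
    · exact Or.inr (Or.inl e1)
    by_cases e2 : d = (i,n)
    · exact Or.inr (Or.inr e2)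
    exact Or.inl ⟨e2, e1, hdC⟩

lemma dn_up (hi2 : 2 ≤ i)
    (hDb : ∀ d ∈ D, 1 ≤ d.1 ∧ d.1 ≤ 2*(n-1) ∧ 1 ≤ d.2 ∧ d.2 ≤ n-1) (hn : 2 ≤ n) :
    dn n i (up n i D) = D := by
  rw [dn, up]
  have hstep : (((D.image fun d : ℕ × ℕ => (psi i d.1, d.2)) ∪ {(1,n), (i,n)}).erase
      ((1:ℕ),n)).erase (i,n) = D.image fun d : ℕ × ℕ => (psi i d.1, d.2) := by
    ext d
    rw [Finset.mem_erase, Finset.mem_erase, Finset.mem_union, Finset.mem_insert,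
      Finset.mem_singleton]
    constructor
    · rintro ⟨hdi, hd1, (hd | rfl | rfl)⟩
      · exact hd
      · exact absurd rfl hd1
      · exact absurd rfl hdi
    · intro hd
      obtain ⟨d₀, hd₀, rfl⟩ := Finset.mem_image.1 hd
      refine ⟨?_, ?_, Or.inl hd⟩
      · intro hh
        exact psi_ne_i (congrArg Prod.fst hh)
      · intro hh
        exact psi_ne_one (hDb d₀ hd₀).1 (congrArg Prod.fst hh)
  rw [hstep, Finset.image_image]
  rw [show ((fun d : ℕ × ℕ => (phi i d.1, d.2)) ∘ (fun d : ℕ × ℕ => (psi i d.1, d.2))) =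
      (fun d : ℕ × ℕ => (phi i (psi i d.1), d.2)) from rfl]
  rw [Finset.image_congr (g := id), Finset.image_id]
  intro d hd
  exact Prod.ext (phi_psi hi2 (hDb d hd).1) rfl

end Fiber5

end S15
namespace S15

section Fiber6

variable {n : ℕ} {lam : List ℕ} {C : Finset (ℕ × ℕ)} {i : ℕ}

lemma phi_lt (hi2 : 2 ≤ i) {r r' : ℕ} (h1 : 2 ≤ r) (h2 : r ≠ i) (h1' : 2 ≤ r') (h2' : r' ≠ i)
    (h : r < r') : phi i r < phi i r' := by
  unfold phi; split_ifs <;> omega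

lemma psi_lt {s s' : ℕ} (h : s < s') : psi i s < psi i s' := by
  unfold psi; split_ifs <;> omega

lemma phi_pos (hi2 : 2 ≤ i) {r : ℕ} (h1 : 2 ≤ r) (h2 : r ≠ i) : 1 ≤ phi i r := by
  unfold phi; split <;> omega

lemma inv_dn (hn : 2 ≤ n) (hC : IsBConfig n lam (delta (n-1)) C) (hi2 : 2 ≤ i)
    (hin : i ≤ n + 1) (hf : C.filter (fun d => d.2 = n) = {(1,n), (i,n)}) :
    invB C = (i - 2) + invB (dn n i C) := by
  obtain ⟨h1n, hinC⟩ := mem_dots hf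
  set C₀ := (C.erase (1, n)).erase (i, n) with hC₀
  set P₀ := (C₀ ×ˢ C₀).filter (fun p : (ℕ×ℕ)×(ℕ×ℕ) => p.1.1 < p.2.1 ∧ p.1.2 < p.2.2) with hP₀
  set Q := (C₀.filter (fun a => a.1 < i)) ×ˢ ({(i,n)} : Finset (ℕ × ℕ)) with hQ
  have claim1 : (C ×ˢ C).filter (fun p : (ℕ×ℕ)×(ℕ×ℕ) => p.1.1 < p.2.1 ∧ p.1.2 < p.2.2)
      = P₀ ∪ Q := by
    ext p
    rw [Finset.mem_filter, Finset.mem_product, Finset.mem_union, hP₀, Finset.mem_filter,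
      Finset.mem_product, hQ, Finset.mem_product, Finset.mem_filter, Finset.mem_singleton]
    constructor
    · rintro ⟨⟨haC, hbC⟩, hc1, hc2⟩
      have hb2 := hC.1 p.2 hbC
      have ha0 := hC.1 p.1 haC
      by_cases hbi : p.2 = (i, n)
      · right
        have hbi1 : p.2.1 = i := by rw [hbi]
        have hbi2 : p.2.2 = n := by rw [hbi]
        have ha1 : p.1 ≠ (1, n) := by
          intro hh
          have : p.1.2 = n := by rw [hh]
          omega
        have ha2 : p.1 ≠ (i, n) := by
          intro hh
          have : p.1.1 = i := by rw [hh]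
          omega
        exact ⟨⟨Finset.mem_erase.2 ⟨ha2, Finset.mem_erase.2 ⟨ha1, haC⟩⟩, by omega⟩, hbi⟩
      · left
        have hbn : p.2.2 ≠ n := by
          intro hh
          have : p.2 ∈ C.filter (fun d => d.2 = n) := Finset.mem_filter.2 ⟨hbC, hh⟩
          rw [hf, Finset.mem_insert, Finset.mem_singleton] at this
          rcases this with h' | h'
          · have : p.2.1 = 1 := by rw [h']
            omega
          · exact hbi h'
        have hble : p.2.2 ≤ n := hb2.2.2.2
        have han : p.1.2 ≠ n := by omega
        have ha1 : p.1 ≠ (1, n) := fun hh => han (by rw [hh])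
        have ha2 : p.1 ≠ (i, n) := fun hh => han (by rw [hh])
        have hb1' : p.2 ≠ (1, n) := fun hh => hbn (by rw [hh])
        have hb2' : p.2 ≠ (i, n) := fun hh => hbn (by rw [hh])
        exact ⟨⟨Finset.mem_erase.2 ⟨ha2, Finset.mem_erase.2 ⟨ha1, haC⟩⟩,
          Finset.mem_erase.2 ⟨hb2', Finset.mem_erase.2 ⟨hb1', hbC⟩⟩⟩, hc1, hc2⟩
    · rintro (⟨⟨ha, hb⟩, hcnd⟩ | ⟨⟨ha, hai⟩, hb⟩)
      · exact ⟨⟨Finset.mem_of_mem_erase (Finset.mem_of_mem_erase ha),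
          Finset.mem_of_mem_erase (Finset.mem_of_mem_erase hb)⟩, hcnd⟩
      · have fa := C0_facts hn hC hf ha
        have hb1 : p.2.1 = i := by rw [hb]
        have hb2 : p.2.2 = n := by rw [hb]
        have h5 := fa.2.2.2.2.2
        refine ⟨⟨fa.1, by rw [hb]; exact hinC⟩, by omega, by omega⟩
  have claim2 : Disjoint P₀ Q := by
    rw [Finset.disjoint_left]
    intro p hp hq
    rw [hP₀, Finset.mem_filter, Finset.mem_product] at hp
    rw [hQ, Finset.mem_product, Finset.mem_singleton] at hq
    exact (Finset.mem_erase.1 hp.1.2).1 hq.2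
  have claim3 : Q.card = i - 2 := by
    rw [hQ, Finset.card_product, Finset.card_singleton, mul_one]
    have hmaps : ∀ x ∈ C₀.filter (fun a => a.1 < i), x.1 ∈ Finset.Icc 2 (i-1) := by
      intro x hx
      rw [Finset.mem_filter] at hx
      have := C0_facts hn hC hf hx.1
      rw [Finset.mem_Icc]
      omega
    rw [Finset.card_eq_sum_card_fiberwise hmaps]
    have hfib : ∀ r ∈ Finset.Icc 2 (i-1),
        ((C₀.filter (fun a => a.1 < i)).filter (fun a => a.1 = r)).card = 1 := by
      intro r hr
      rw [Finset.mem_Icc] at hr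
      rw [Finset.filter_filter]
      have he : (C₀.filter (fun a => a.1 < i ∧ a.1 = r)) = C₀.filter (fun a => a.1 = r) := by
        apply Finset.filter_congr
        intro d hd
        constructor
        · exact fun hh => hh.2
        · exact fun hh => ⟨by omega, hh⟩
      rw [he, hC₀, C0_filter_row hC (by omega) (by omega)]
      apply hC.2.1
      rw [Finset.mem_Icc]
      omega
    rw [Finset.sum_congr rfl hfib, Finset.sum_const, Nat.card_Icc, smul_eq_mul, mul_one]
    omega
  have claim4 : P₀.card = invB (dn n i C) := by
    rw [invB]
    refine Finset.card_bij' (fun p _ => ((phi i p.1.1, p.1.2), (phi i p.2.1, p.2.2)))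
      (fun p _ => ((psi i p.1.1, p.1.2), (psi i p.2.1, p.2.2))) ?_ ?_ ?_ ?_
    · -- forward membership
      intro p hp
      rw [hP₀, Finset.mem_filter, Finset.mem_product] at hp
      obtain ⟨⟨ha, hb⟩, hc1, hc2⟩ := hp
      have fa := C0_facts hn hC hf ha
      have fb := C0_facts hn hC hf hb
      rw [Finset.mem_filter, Finset.mem_product]
      refine ⟨⟨?_, ?_⟩, ?_, hc2⟩
      · exact Finset.mem_image_of_mem _ ha
      · exact Finset.mem_image_of_mem _ hb
      · exact phi_lt hi2 fa.2.1 fa.2.2.2.1 fb.2.1 fb.2.2.2.1 hc1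
    · -- backward membership
      intro p hp
      rw [Finset.mem_filter, Finset.mem_product] at hp
      simp only [dn] at hp
      obtain ⟨⟨ha, hb⟩, hc1, hc2⟩ := hp
      obtain ⟨a₀, ha₀, haeq⟩ := Finset.mem_image.1 ha
      obtain ⟨b₀, hb₀, hbeq⟩ := Finset.mem_image.1 hb
      have fa := C0_facts hn hC hf ha₀
      have fb := C0_facts hn hC hf hb₀
      have hua : ((psi i p.1.1, p.1.2) : ℕ × ℕ) = a₀ := by
        rw [← haeq]
        exact Prod.ext (psi_phi hi2 fa.2.1 fa.2.2.2.1) rfl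
      have hub : ((psi i p.2.1, p.2.2) : ℕ × ℕ) = b₀ := by
        rw [← hbeq]
        exact Prod.ext (psi_phi hi2 fb.2.1 fb.2.2.2.1) rfl
      rw [hP₀, Finset.mem_filter, Finset.mem_product]
      dsimp only
      rw [hua, hub]
      exact ⟨⟨ha₀, hb₀⟩, psi_lt hc1, hc2⟩
    · -- left inverse
      intro p hp
      rw [hP₀, Finset.mem_filter, Finset.mem_product] at hp
      obtain ⟨⟨ha, hb⟩, -⟩ := hp
      have fa := C0_facts hn hC hf ha
      have fb := C0_facts hn hC hf hb
      exact Prod.ext (Prod.ext (psi_phi hi2 fa.2.1 fa.2.2.2.1) rfl)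
        (Prod.ext (psi_phi hi2 fb.2.1 fb.2.2.2.1) rfl)
    · -- right inverse
      intro p hp
      rw [Finset.mem_filter, Finset.mem_product] at hp
      simp only [dn] at hp
      obtain ⟨⟨ha, hb⟩, -⟩ := hp
      obtain ⟨a₀, ha₀, haeq⟩ := Finset.mem_image.1 ha
      obtain ⟨b₀, hb₀, hbeq⟩ := Finset.mem_image.1 hb
      have fa := C0_facts hn hC hf ha₀
      have fb := C0_facts hn hC hf hb₀
      have hpa : 1 ≤ p.1.1 := by
        rw [← haeq]
        exact phi_pos hi2 fa.2.1 fa.2.2.2.1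
      have hpb : 1 ≤ p.2.1 := by
        rw [← hbeq]
        exact phi_pos hi2 fb.2.1 fb.2.2.2.1
      exact Prod.ext (Prod.ext (phi_psi hi2 hpa) rfl) (Prod.ext (phi_psi hi2 hpb) rfl)
  rw [invB, claim1, Finset.card_union_of_disjoint claim2, claim3, claim4]
  omega


end Fiber6

end S15

/-- for `λ` with `λ₁ = n-1` (padded with zeros to length `n+1`),
`𝔠ⁿ(λ) = Σ_{i=2}^{n+1} q^{i-2} 𝔠^{n-1}(λ^i)` where `λ^i` is `λ` with `λ₁` and `λ_i`
removed. -/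
theorem stmt15 (n : ℕ) (hn : 2 ≤ n) (lam : List ℕ) (h : IsPartIn n lam)
    (h1 : lam.getD 0 0 = n - 1) :
    cF n lam = ∑ i ∈ Finset.Icc 2 (n + 1),
      (X : Polynomial ℕ) ^ (i - 2) * cF (n - 1) (((padTo (n + 1) lam).tail).eraseIdx (i - 2)) := by
  rw [cF, partFun]
  set A := ((Finset.Icc 1 (2 * n) ×ˢ Finset.Icc 1 n).powerset.filter
      (fun C => IsBConfig n lam (delta (n-1)) C)) with hA
  have hmaps : ∀ C ∈ A, S15.rowN n C ∈ Finset.Icc 2 (n+1) := by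
    intro C hCA
    rw [hA, Finset.mem_filter] at hCA
    obtain ⟨i₀, hi₀2, hi₀n, -, hrow⟩ := S15.key hn h1 hCA.2
    rw [hrow, Finset.mem_Icc]
    exact ⟨hi₀2, hi₀n⟩
  rw [← Finset.sum_fiberwise_of_maps_to hmaps (fun C => (X : Polynomial ℕ) ^ invB C)]
  apply Finset.sum_congr rfl
  intro i hi
  rw [Finset.mem_Icc] at hi
  have getf : ∀ C ∈ A.filter (fun C => S15.rowN n C = i),
      IsBConfig n lam (delta (n-1)) C ∧
        C.filter (fun d => d.2 = n) = {(1,n),(i,n)} := by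
    intro C hCA
    rw [Finset.mem_filter, hA, Finset.mem_filter] at hCA
    obtain ⟨⟨hpow, hC⟩, hrow⟩ := hCA
    obtain ⟨i₀, h2, h3, hf, hr⟩ := S15.key hn h1 hC
    have hieq : i₀ = i := by rw [← hr, hrow]
    rw [hieq] at hf
    exact ⟨hC, hf⟩
  rw [cF, partFun, Finset.mul_sum]
  refine Finset.sum_nbij' (S15.dn n i) (S15.up n i) ?_ ?_ ?_ ?_ ?_
  · intro C hCA
    obtain ⟨hC, hf⟩ := getf C hCA
    have hcfg := S15.dn_isConfig hn h hC hi.1 hi.2 hf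
    rw [Finset.mem_filter]
    exact ⟨Finset.mem_powerset.2 (S15.config_subset hcfg), hcfg⟩
  · intro D hD
    rw [Finset.mem_filter] at hD
    have hup := S15.up_isConfig hn h h1 hi.1 hi.2 hD.2
    rw [Finset.mem_filter, hA, Finset.mem_filter]
    exact ⟨⟨Finset.mem_powerset.2 (S15.config_subset hup), hup⟩,
      S15.rowN_up hi.1 hD.2.1 hn⟩
  · intro C hCA
    obtain ⟨hC, hf⟩ := getf C hCA
    exact S15.up_dn hn hC hi.1 hf
  · intro D hD
    rw [Finset.mem_filter] at hD
    exact S15.dn_up hi.1 hD.2.1 hn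
  · intro C hCA
    obtain ⟨hC, hf⟩ := getf C hCA
    rw [S15.inv_dn hn hC hi.1 hi.2 hf, pow_add]
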